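/- The number of partitions of n all of whose successive ranks lie in {1,2} equals the number of partitions of n whose successive parts differ by at least 2 and whose smallest part is at least 2. -/

import Mathlib

/-- The conjugate partition: `conj π i = #{j ≥ 1 : π j ≥ i}`. -/
noncomputable def conj (π : ℕ → ℕ) (i : ℕ) : ℕ := {j : ℕ | 1 ≤ j ∧ i ≤ π j}.ncard

/-- A partition, as a function from part indices (starting at 1) to part sizes:
nonincreasing on indices ≥ 1, eventually zero, with the unused index 0 set to 0. -/
def IsPartition (π : ℕ → ℕ) : Prop :=
  π 0 = 0 ∧ (∀ i j, 1 ≤ i → i ≤ j → π j ≤ π i) ∧ ∃ N, ∀ j, N ≤ j → π j = 0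

/-- The number partitioned, i.e. the sum of all parts. -/
noncomputable def size (π : ℕ → ℕ) : ℕ := ∑' j, π j

/-- The Durfee square size: the largest `d` with `π d ≥ d`. -/
noncomputable def durfee (π : ℕ → ℕ) : ℕ := sSup {d : ℕ | d ≤ π d}

/-- The number of parts. -/
noncomputable def len (π : ℕ → ℕ) : ℕ := conj π 1

/-- The `i`-th successive rank `r_i = π_i - π'_i`. -/
noncomputable def rank (π : ℕ → ℕ) (i : ℕ) : ℤ := (π i : ℤ) - (conj π i : ℤ)

/-- The `i`-th angle (hook) length `α_i = π_i + π'_i - 2 i + 1`, as an integer. -/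
noncomputable def ang (π : ℕ → ℕ) (i : ℕ) : ℤ := (π i : ℤ) + (conj π i : ℤ) - 2 * i + 1

/-- The partition `α(π)` of angle lengths: `α_i = π_i + π'_i - 2 i + 1` for `1 ≤ i ≤ d(π)`,
and `0` outside that range. -/
noncomputable def angPart (π : ℕ → ℕ) (i : ℕ) : ℕ :=
  if 1 ≤ i ∧ i ≤ durfee π then π i + conj π i + 1 - 2 * i else 0


lemma conj_spec {π : ℕ → ℕ} (hπ : IsPartition π) {i j : ℕ} (hi : 1 ≤ i) (hj : 1 ≤ j) :
    i ≤ π j ↔ j ≤ conj π i := by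
  obtain ⟨h0, hmono, N, hN⟩ := hπ
  set S : Set ℕ := {j : ℕ | 1 ≤ j ∧ i ≤ π j} with hS
  have hbdd : ∀ k ∈ insert 0 S, k ≤ N := by
    rintro k (rfl | ⟨hk1, hki⟩)
    · exact Nat.zero_le N
    · by_contra h
      have := hN k (le_of_not_ge (fun hh => h (le_of_lt (lt_of_le_of_lt hh (by omega)))))
      omega
  have hbdd' : BddAbove (insert 0 S) := ⟨N, hbdd⟩
  set m := sSup (insert 0 S) with hm
  have hmem : m ∈ insert 0 S := Nat.sSup_mem (Set.insert_nonempty _ _) hbdd'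
  have hSeq : S = Set.Icc 1 m := by
    ext k
    constructor
    · rintro ⟨hk1, hki⟩
      exact ⟨hk1, le_csSup hbdd' (Set.mem_insert_of_mem _ ⟨hk1, hki⟩)⟩
    · rintro ⟨hk1, hkm⟩
      have hm0 : m ≠ 0 := by omega
      rcases hmem with h | ⟨hm1, hmi⟩
      · omega
      · exact ⟨hk1, le_trans hmi (hmono k m hk1 hkm)⟩
  have hconj : conj π i = m := by
    rw [conj, ← hS, hSeq, ← Finset.coe_Icc, Set.ncard_coe_finset, Nat.card_Icc]
    omega
  rw [hconj]
  constructor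
  · intro h
    have : j ∈ S := ⟨hj, h⟩
    rw [hSeq] at this; exact this.2
  · intro h
    have : j ∈ S := by rw [hSeq]; exact ⟨hj, h⟩
    exact this.2

lemma conj_antitone {π : ℕ → ℕ} (hπ : IsPartition π) {i i' : ℕ} (hi : 1 ≤ i) (h : i ≤ i') :
    conj π i' ≤ conj π i := by
  rcases Nat.eq_zero_or_pos (conj π i') with h0 | h1
  · omega
  · have h2 : i' ≤ π (conj π i') := (conj_spec hπ (by omega) h1).mpr le_rfl
    exact (conj_spec hπ hi h1).mp (by omega)

lemma conj_conj {π : ℕ → ℕ} (hπ : IsPartition π) {j : ℕ} (hj : 1 ≤ j) :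
    conj (conj π) j = π j := by
  have : {i : ℕ | 1 ≤ i ∧ j ≤ conj π i} = {i : ℕ | 1 ≤ i ∧ i ≤ π j} := by
    ext i
    simp only [Set.mem_setOf_eq]
    constructor
    · rintro ⟨h1, h2⟩; exact ⟨h1, (conj_spec hπ h1 hj).mpr h2⟩
    · rintro ⟨h1, h2⟩; exact ⟨h1, (conj_spec hπ h1 hj).mp h2⟩
  rw [conj, this, show {i : ℕ | 1 ≤ i ∧ i ≤ π j} = Set.Icc 1 (π j) from rfl,
    ← Finset.coe_Icc, Set.ncard_coe_finset, Nat.card_Icc]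
  omega

lemma durfee_bdd {π : ℕ → ℕ} (hπ : IsPartition π) : BddAbove {d : ℕ | d ≤ π d} := by
  obtain ⟨h0, hmono, N, hN⟩ := hπ
  refine ⟨N, fun d hd => ?_⟩
  by_contra h
  have := hN d (by omega)
  simp only [Set.mem_setOf_eq] at hd
  omega

lemma durfee_le_self {π : ℕ → ℕ} (hπ : IsPartition π) : durfee π ≤ π (durfee π) :=
  Nat.sSup_mem ⟨0, by simp⟩ (durfee_bdd hπ)

lemma self_le_durfee {π : ℕ → ℕ} (hπ : IsPartition π) : π (durfee π + 1) ≤ durfee π := by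
  by_contra h
  have : durfee π + 1 ∈ {d : ℕ | d ≤ π d} := by simp only [Set.mem_setOf_eq]; omega
  have h3 := le_csSup (durfee_bdd hπ) this
  have h4 : sSup {d : ℕ | d ≤ π d} = durfee π := rfl
  omega

lemma durfee_eq {π : ℕ → ℕ} (hπ : IsPartition π) {d : ℕ} (h1 : d ≤ π d) (h2 : π (d + 1) ≤ d) :
    durfee π = d := by
  have hmono := hπ.2.1
  apply le_antisymm
  · apply csSup_le ⟨0, by simp⟩
    intro e he
    simp only [Set.mem_setOf_eq] at he
    by_contra h
    have : π e ≤ π (d + 1) := hmono (d + 1) e (by omega) (by omega)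
    omega
  · exact le_csSup (durfee_bdd hπ) h1

/-- A downward-closed filter on `Icc 1 d` by an antitone predicate is an initial segment. -/
lemma filter_eq_Icc {c : ℕ → ℕ} {d j : ℕ}
    (hc : ∀ a b, 1 ≤ a → a ≤ b → b ≤ d → c b ≤ c a) :
    (Finset.Icc 1 d).filter (fun i => j ≤ c i)
      = Finset.Icc 1 (((Finset.Icc 1 d).filter (fun i => j ≤ c i)).card) := by
  set s := (Finset.Icc 1 d).filter (fun i => j ≤ c i) with hs
  rcases s.eq_empty_or_nonempty with h | h
  · rw [h]; simp
  · have hm := s.max'_mem h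
    have hsub : s ⊆ Finset.Icc 1 d := Finset.filter_subset _ _
    have hmIcc := hsub hm
    simp only [Finset.mem_Icc] at hmIcc
    have hmj : j ≤ c (s.max' h) := (Finset.mem_filter.mp hm).2
    have : s = Finset.Icc 1 (s.max' h) := by
      apply Finset.Subset.antisymm
      · intro x hx
        have hx' := hsub hx
        simp only [Finset.mem_Icc] at hx' ⊢
        exact ⟨hx'.1, Finset.le_max' s x hx⟩
      · intro x hx
        simp only [Finset.mem_Icc] at hx
        refine Finset.mem_filter.mpr ⟨Finset.mem_Icc.mpr ⟨hx.1, le_trans hx.2 hmIcc.2⟩, ?_⟩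
        exact le_trans hmj (hc x (s.max' h) hx.1 hx.2 hmIcc.2)
    rw [this] at *
    congr 1
    rw [Nat.card_Icc]
    omega

lemma filter_card_iff {c : ℕ → ℕ} {d j : ℕ}
    (hc : ∀ a b, 1 ≤ a → a ≤ b → b ≤ d → c b ≤ c a) {i : ℕ} (hi1 : 1 ≤ i) (hid : i ≤ d) :
    i ≤ ((Finset.Icc 1 d).filter (fun k => j ≤ c k)).card ↔ j ≤ c i := by
  constructor
  · intro h
    have : i ∈ (Finset.Icc 1 d).filter (fun k => j ≤ c k) := by
      rw [filter_eq_Icc hc]; exact Finset.mem_Icc.mpr ⟨hi1, h⟩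
    exact (Finset.mem_filter.mp this).2
  · intro h
    have : i ∈ (Finset.Icc 1 d).filter (fun k => j ≤ c k) :=
      Finset.mem_filter.mpr ⟨Finset.mem_Icc.mpr ⟨hi1, hid⟩, h⟩
    rw [filter_eq_Icc hc] at this
    exact (Finset.mem_Icc.mp this).2

lemma sum_two_mul_sub_one (d : ℕ) :
    ∑ i ∈ Finset.Icc 1 d, (2 * (i : ℤ) - 1) = (d : ℤ) ^ 2 := by
  induction d with
  | zero => simp
  | succ d ih =>
      rw [Finset.sum_Icc_succ_top (by omega), ih]
      push_cast; ring

/-- The tail of a partition beyond `d` is given by counting conjugate parts, when the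
tail values are forced below `d`. -/
lemma tail_eq {π : ℕ → ℕ} (hπ : IsPartition π) {d j : ℕ} (hd : durfee π ≤ d) (hj : d < j) :
    π j = ((Finset.Icc 1 d).filter (fun i => j ≤ conj π i)).card := by
  have hkey : ∀ i, d + 1 ≤ i → conj π i ≤ d := by
    intro i hi
    have h1 : conj π i ≤ conj π (durfee π + 1) := conj_antitone hπ (by omega) (by omega)
    have h2 : conj π (durfee π + 1) ≤ durfee π := by
      by_contra h
      have := (conj_spec hπ (i := durfee π + 1) (j := durfee π + 1) (by omega) (by omega)).mpr
        (by omega)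
      have := self_le_durfee hπ
      omega
    omega
  have hset : {i : ℕ | 1 ≤ i ∧ j ≤ conj π i}
      = ↑((Finset.Icc 1 d).filter (fun i => j ≤ conj π i)) := by
    ext i
    simp only [Set.mem_setOf_eq, Finset.coe_filter, Finset.mem_Icc]
    constructor
    · rintro ⟨h1, h2⟩
      refine ⟨⟨h1, ?_⟩, h2⟩
      by_contra h
      have := hkey i (by omega)
      omega
    · rintro ⟨⟨h1, _⟩, h2⟩; exact ⟨h1, h2⟩
  rw [← conj_conj hπ (by omega : 1 ≤ j), conj, hset, Set.ncard_coe_finset]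

lemma size_eq {π : ℕ → ℕ} (hπ : IsPartition π) :
    (size π : ℤ) = ∑ i ∈ Finset.Icc 1 (durfee π),
      ((π i : ℤ) + (conj π i : ℤ) + 1 - 2 * i) := by
  obtain ⟨h0, hmono, N, hN⟩ := id hπ
  set d := durfee π with hdd
  -- a common bound
  set M := N + d + 1 with hM
  have hzero : ∀ j, M ≤ j → π j = 0 := fun j hj => hN j (by omega)
  have hdM : d + 1 ≤ M := by omega
  have hconjM : ∀ i, 1 ≤ i → conj π i ≤ M := by
    intro i hi
    by_contra h
    have h1 : (1:ℕ) ≤ M := by omega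
    have := (conj_spec hπ hi (j := M) (by omega)).mpr (by omega)
    have := hzero M le_rfl
    omega
  -- size as finite sum
  have hsize : size π = ∑ j ∈ Finset.Icc 1 M, π j := by
    rw [size, tsum_eq_sum (s := Finset.range (M + 1))
      (fun b hb => hzero b (by simp only [Finset.mem_range] at hb; omega))]
    apply (Finset.sum_subset ?_ ?_).symm
    · intro x hx; simp only [Finset.mem_Icc] at hx; simp only [Finset.mem_range]; omega
    · intro x hx1 hx2
      simp only [Finset.mem_range] at hx1
      simp only [Finset.mem_Icc] at hx2
      have : x = 0 := by omega
      rw [this, h0]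
  rcases Nat.eq_zero_or_pos d with hd0 | hd1
  · -- degenerate case: π = 0
    have hpi1 : π 1 = 0 := by
      by_contra h
      have : (1:ℕ) ∈ {e : ℕ | e ≤ π e} := by simp only [Set.mem_setOf_eq]; omega
      have h2 := le_csSup (⟨N, fun e he => by
        simp only [Set.mem_setOf_eq] at he
        by_contra hh
        have := hN e (by omega); omega⟩ : BddAbove {e : ℕ | e ≤ π e}) this
      have h3 : sSup {e : ℕ | e ≤ π e} = d := rfl
      omega
    have : ∀ j ∈ Finset.Icc 1 M, π j = 0 := by
      intro j hj
      simp only [Finset.mem_Icc] at hj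
      have := hmono 1 j le_rfl hj.1
      omega
    rw [hsize, Finset.sum_congr rfl this, hd0]
    simp
  -- main case
  have hIcc : Finset.Icc 1 M = Finset.Ioc 0 M := by rw [← Finset.Icc_add_one_left_eq_Ioc]; rfl
  have hIccd : Finset.Icc 1 d = Finset.Ioc 0 d := by rw [← Finset.Icc_add_one_left_eq_Ioc]; rfl
  have hsplit : ∑ j ∈ Finset.Icc 1 M, π j
      = ∑ j ∈ Finset.Icc 1 d, π j + ∑ j ∈ Finset.Ioc d M, π j := by
    rw [hIcc, hIccd, Finset.sum_Ioc_consecutive _ (by omega) (by omega)]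
  -- tail sum
  have hdge : d ≤ π d := durfee_le_self hπ
  have hconjd : ∀ i, 1 ≤ i → i ≤ d → d ≤ conj π i := by
    intro i hi hid
    exact (conj_spec hπ hi hd1).mp (by omega)
  have htail : ∑ j ∈ Finset.Ioc d M, π j
      = ∑ i ∈ Finset.Icc 1 d, (conj π i - d) := by
    have h1 : ∀ j ∈ Finset.Ioc d M, π j
        = ∑ i ∈ Finset.Icc 1 d, (if j ≤ conj π i then 1 else 0) := by
      intro j hj
      simp only [Finset.mem_Ioc] at hj
      rw [tail_eq hπ le_rfl hj.1, Finset.card_filter]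
    rw [Finset.sum_congr rfl h1, Finset.sum_comm]
    apply Finset.sum_congr rfl
    intro i hi
    simp only [Finset.mem_Icc] at hi
    rw [← Finset.card_filter]
    have : (Finset.Ioc d M).filter (fun j => j ≤ conj π i) = Finset.Ioc d (conj π i) := by
      ext j
      simp only [Finset.mem_filter, Finset.mem_Ioc]
      have := hconjM i hi.1
      omega
    rw [this, Nat.card_Ioc]
  have hcast : ∀ i ∈ Finset.Icc 1 d, ((conj π i - d : ℕ) : ℤ) = (conj π i : ℤ) - d := by
    intro i hi
    simp only [Finset.mem_Icc] at hi
    have := hconjd i hi.1 hi.2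
    omega
  have h2 : ((∑ i ∈ Finset.Icc 1 d, (conj π i - d) : ℕ) : ℤ)
      = ∑ i ∈ Finset.Icc 1 d, ((conj π i : ℤ) - d) := by
    rw [Nat.cast_sum]; exact Finset.sum_congr rfl hcast
  rw [hsize, hsplit, htail, Nat.cast_add, h2, Nat.cast_sum]
  have hterm : ∀ i ∈ Finset.Icc 1 d,
      ((π i : ℤ) + (conj π i : ℤ) + 1 - 2 * i)
        = (π i : ℤ) + ((conj π i : ℤ) - d) + ((d : ℤ) - (2 * (i : ℤ) - 1)) := by
    intro i _; ring
  have hz : ∑ x ∈ Finset.Icc 1 d, ((d : ℤ) - (2 * (x : ℤ) - 1)) = 0 := by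
    rw [Finset.sum_sub_distrib, sum_two_mul_sub_one, Finset.sum_const, Nat.card_Icc,
      Nat.add_sub_cancel, nsmul_eq_mul]
    push_cast; ring
  rw [Finset.sum_congr rfl hterm, Finset.sum_add_distrib, hz, add_zero,
    Finset.sum_add_distrib, Finset.sum_sub_distrib]

noncomputable def Ginv (α : ℕ → ℕ) (j : ℕ) : ℕ :=
  if j = 0 then 0
  else if j ≤ len α then (α j + 1) / 2 + j
  else ((Finset.Icc 1 (len α)).filter (fun i => j + 1 ≤ α i / 2 + i)).card

lemma size_eq_sum {π : ℕ → ℕ} (h0 : π 0 = 0) {N : ℕ} (hN : ∀ j, N < j → π j = 0) :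
    size π = ∑ j ∈ Finset.Icc 1 N, π j := by
  rw [size, tsum_eq_sum (s := Finset.range (N + 1))
    (fun b hb => hN b (by simp only [Finset.mem_range] at hb; omega))]
  apply (Finset.sum_subset ?_ ?_).symm
  · intro x hx; simp only [Finset.mem_Icc] at hx; simp only [Finset.mem_range]; omega
  · intro x hx1 hx2
    simp only [Finset.mem_range] at hx1
    simp only [Finset.mem_Icc] at hx2
    have : x = 0 := by omega
    rw [this, h0]

lemma forward {π : ℕ → ℕ} (hπ : IsPartition π)
    (hr : ∀ i, 1 ≤ i → i ≤ durfee π → rank π i ∈ ({1, 2} : Set ℤ)) :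
    IsPartition (angPart π) ∧ len (angPart π) = durfee π ∧
    (∀ i, 1 ≤ i → i ≤ durfee π → 2 ≤ angPart π i) ∧
    (∀ i, 1 ≤ i → i + 1 ≤ durfee π → angPart π (i + 1) + 2 ≤ angPart π i) ∧
    size (angPart π) = size π ∧
    Ginv (angPart π) = π := by
  obtain ⟨h0, hmono, N, hN⟩ := id hπ
  set d := durfee π with hdd
  set α := angPart π with hα
  have hπd : d ≤ π d := durfee_le_self hπ
  have hp : ∀ i, 1 ≤ i → i ≤ d → d ≤ π i := fun i hi hid => le_trans hπd (hmono i d hi hid)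
  have hc : ∀ i, 1 ≤ i → i ≤ d → d ≤ conj π i := by
    intro i hi hid
    exact (conj_spec hπ hi (by omega)).mp (by have := hπd; omega)
  have hrank : ∀ i, 1 ≤ i → i ≤ d →
      (π i : ℤ) = (conj π i : ℤ) + 1 ∨ (π i : ℤ) = (conj π i : ℤ) + 2 := by
    intro i hi hid
    have := hr i hi hid
    simp only [Set.mem_insert_iff, Set.mem_singleton_iff, rank] at this
    omega
  have hval : ∀ i, 1 ≤ i → i ≤ d →
      (α i : ℤ) = (π i : ℤ) + (conj π i : ℤ) + 1 - 2 * i := by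
    intro i hi hid
    have h1 := hp i hi hid
    have h2 := hc i hi hid
    simp only [hα, angPart, if_pos (⟨hi, hid⟩ : 1 ≤ i ∧ i ≤ durfee π)]
    omega
  have hzero : ∀ i, d < i → α i = 0 := by
    intro i hi
    simp only [hα, angPart]
    rw [if_neg]
    omega
  have hzero0 : α 0 = 0 := by
    simp only [hα, angPart]
    rw [if_neg]
    omega
  have hconjanti : ∀ i j, 1 ≤ i → i ≤ j → conj π j ≤ conj π i :=
    fun i j hi hij => conj_antitone hπ hi hij
  have hmono2 : ∀ i j, 1 ≤ i → i ≤ j → α j ≤ α i := by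
    intro i j hi hij
    rcases le_or_gt j d with hjd | hjd
    · have h1 := hval i hi (by omega)
      have h2 := hval j (by omega) hjd
      have h3 := hmono i j hi hij
      have h4 := hconjanti i j hi hij
      omega
    · rw [hzero j hjd]; omega
  have hgap : ∀ i, 1 ≤ i → i + 1 ≤ d → α (i + 1) + 2 ≤ α i := by
    intro i hi hid
    have h1 := hval i hi (by omega)
    have h2 := hval (i + 1) (by omega) hid
    have h3 := hmono i (i + 1) hi (by omega)
    have h4 := hconjanti i (i + 1) hi (by omega)
    omega
  have hαd : ∀ (hd1 : 1 ≤ d), 2 ≤ α d := by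
    intro hd1
    have h1 := hval d hd1 le_rfl
    have h2 := hrank d hd1 le_rfl
    have h3 := hc d hd1 le_rfl
    omega
  have hα2 : ∀ i, 1 ≤ i → i ≤ d → 2 ≤ α i := by
    intro i hi hid
    have := hmono2 i d hi hid
    have := hαd (by omega)
    omega
  have hpart : IsPartition α :=
    ⟨hzero0, hmono2, d + 1, fun j hj => hzero j (by omega)⟩
  have hlen : len α = d := by
    rcases Nat.eq_zero_or_pos d with hd0 | hd1
    · rw [len, conj]
      convert Set.ncard_empty ℕ
      ext j
      simp only [Set.mem_setOf_eq, Set.mem_empty_iff_false, iff_false, not_and, not_le]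
      intro hj
      rw [hzero j (by omega)]
      omega
    · have h1 : d ≤ conj α 1 := (conj_spec hpart le_rfl hd1).mp (by have := hαd hd1; omega)
      have h2 : conj α 1 ≤ d := by
        by_contra h
        have := (conj_spec hpart (i := 1) (j := d + 1) le_rfl (by omega)).mpr (by omega)
        have := hzero (d + 1) (by omega)
        omega
      rw [len]; omega
  have hsize : size α = size π := by
    have h1 : size α = ∑ j ∈ Finset.Icc 1 d, α j :=
      size_eq_sum hzero0 (fun j hj => hzero j hj)
    have h2 : ((∑ j ∈ Finset.Icc 1 d, α j : ℕ) : ℤ)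
        = ∑ j ∈ Finset.Icc 1 d, ((π j : ℤ) + (conj π j : ℤ) + 1 - 2 * j) := by
      rw [Nat.cast_sum]
      apply Finset.sum_congr rfl
      intro j hj
      simp only [Finset.mem_Icc] at hj
      exact hval j hj.1 hj.2
    have h3 := size_eq hπ
    have : (size α : ℤ) = (size π : ℤ) := by rw [h1, h2, h3]
    exact_mod_cast this
  refine ⟨hpart, hlen, hα2, hgap, hsize, ?_⟩
  funext j
  rcases Nat.eq_zero_or_pos j with hj0 | hj1
  · rw [hj0, Ginv, if_pos rfl, h0]
  rcases le_or_gt j d with hjd | hjd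
  · rw [Ginv, if_neg (by omega), if_pos (by rw [hlen]; omega)]
    have h1 := hval j hj1 hjd
    have h2 := hrank j hj1 hjd
    have h3 := hp j hj1 hjd
    have h4 := hc j hj1 hjd
    omega
  · rw [Ginv, if_neg (by omega), if_neg (by rw [hlen]; omega), hlen]
    rw [tail_eq hπ le_rfl hjd]
    congr 1
    apply Finset.filter_congr
    intro i hi
    simp only [Finset.mem_Icc] at hi
    have h1 := hval i hi.1 hi.2
    have h2 := hrank i hi.1 hi.2
    have h3 := hp i hi.1 hi.2
    have h4 := hc i hi.1 hi.2
    omega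

lemma backward {α : ℕ → ℕ} (hα : IsPartition α)
    (hgap : ∀ i, 1 ≤ i → i + 1 ≤ len α → α (i + 1) + 2 ≤ α i)
    (hmin : ∀ i, 1 ≤ i → i ≤ len α → 2 ≤ α i) :
    IsPartition (Ginv α) ∧ durfee (Ginv α) = len α ∧
    (∀ i, 1 ≤ i → i ≤ len α → rank (Ginv α) i ∈ ({1, 2} : Set ℤ)) ∧
    size (Ginv α) = size α ∧
    angPart (Ginv α) = α := by
  obtain ⟨h0, hmono, N, hN⟩ := id hα
  set d := len α with hdd
  set π := Ginv α with hπd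
  -- basic facts about α
  have hα1 : ∀ j, 1 ≤ j → (1 ≤ α j ↔ j ≤ d) := fun j hj => conj_spec hα le_rfl hj
  have hαzero : ∀ j, d < j → α j = 0 := by
    intro j hj
    rcases Nat.eq_zero_or_pos (α j) with h | h
    · exact h
    · have := (hα1 j (by omega)).mp h; omega
  -- iterated gap
  have hgap' : ∀ b, b ≤ d → ∀ a, 1 ≤ a → a ≤ b → α b + 2 * (b - a) ≤ α a := by
    intro b
    induction b with
    | zero => intro _ a _ h; omega
    | succ b ih =>
        intro hbd a ha hab
        rcases Nat.eq_or_lt_of_le hab with h | h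
        · rw [h]; omega
        · have h1 := ih (by omega) a ha (by omega)
          have h2 := hgap b (by omega) (by omega)
          omega
  -- monotonicity of c i := α i / 2 + i (shifted by one for ℕ-sub avoidance)
  have hcanti : ∀ a b, 1 ≤ a → a ≤ b → b ≤ d → α b / 2 + b ≤ α a / 2 + a := by
    intro a b ha hab hbd
    have := hgap' b hbd a ha hab
    omega
  -- values of π
  have hπ0 : π 0 = 0 := by rw [hπd, Ginv, if_pos rfl]
  have hπin : ∀ j, 1 ≤ j → j ≤ d → π j = (α j + 1) / 2 + j := by
    intro j hj hjd
    rw [hπd, Ginv, if_neg (by omega), if_pos (by rw [← hdd]; omega)]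
  have hπout : ∀ j, d < j →
      π j = ((Finset.Icc 1 d).filter (fun i => j + 1 ≤ α i / 2 + i)).card := by
    intro j hj
    rw [hπd, Ginv, if_neg (by omega), if_neg (by rw [← hdd]; omega), ← hdd]
  have hπoutle : ∀ j, d < j → π j ≤ d := by
    intro j hj
    rw [hπout j hj]
    calc ((Finset.Icc 1 d).filter (fun i => j + 1 ≤ α i / 2 + i)).card
        ≤ (Finset.Icc 1 d).card := Finset.card_filter_le _ _
      _ = d := by rw [Nat.card_Icc]; omega
  have hπd1 : ∀ (hd1 : 1 ≤ d), d + 1 ≤ π d := by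
    intro hd1
    rw [hπin d hd1 le_rfl]
    have := hmin d hd1 le_rfl
    omega
  -- π is monotone
  have hπmono : ∀ i j, 1 ≤ i → i ≤ j → π j ≤ π i := by
    intro i j hi hij
    rcases le_or_gt j d with hjd | hjd
    · rw [hπin i hi (by omega), hπin j (by omega) hjd]
      have := hgap' j hjd i hi hij
      omega
    · rcases le_or_gt i d with hid | hid
      · have h1 := hπoutle j hjd
        have h2 : π d ≤ π i := by
          rw [hπin i hi hid, hπin d (by omega) le_rfl]
          have := hgap' d le_rfl i hi hid
          omega
        have := hπd1 (by omega)
        omega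
      · rw [hπout i hid, hπout j (by omega)]
        apply Finset.card_le_card
        intro x hx
        simp only [Finset.mem_filter, Finset.mem_Icc] at hx ⊢
        omega
  have hπpart : IsPartition π := by
    refine ⟨hπ0, hπmono, α 1 + d + 2, fun j hj => ?_⟩
    have hjd : d < j := by omega
    rw [hπout j hjd]
    rw [Finset.card_eq_zero, Finset.filter_eq_empty_iff]
    intro x hx
    simp only [Finset.mem_Icc] at hx
    have h1 : α x ≤ α 1 := hmono 1 x le_rfl hx.1
    omega
  -- durfee
  have hdurf : durfee π = d := by
    apply durfee_eq hπpart
    · rcases Nat.eq_zero_or_pos d with hd0 | hd1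
      · omega
      · have := hπd1 hd1; omega
    · have := hπoutle (d + 1) (by omega); omega
  -- conjugate values
  have hcd : ∀ i, 1 ≤ i → i ≤ d → d + 1 ≤ α i / 2 + i := by
    intro i hi hid
    have h1 := hcanti i d hi hid le_rfl
    have h2 := hmin d (by omega) le_rfl
    omega
  have hconj : ∀ i, 1 ≤ i → i ≤ d → conj π i + 1 = α i / 2 + i := by
    intro i hi hid
    have hset : {j : ℕ | 1 ≤ j ∧ i ≤ π j} = Set.Icc 1 (α i / 2 + i - 1) := by
      ext j
      simp only [Set.mem_setOf_eq, Set.mem_Icc]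
      constructor
      · rintro ⟨hj1, hjπ⟩
        refine ⟨hj1, ?_⟩
        rcases le_or_gt j d with hjd | hjd
        · have := hcd i hi hid; omega
        · rw [hπout j hjd] at hjπ
          have := (filter_card_iff (c := fun k => α k / 2 + k) (j := j + 1)
            hcanti hi hid).mp hjπ
          omega
      · rintro ⟨hj1, hjc⟩
        refine ⟨hj1, ?_⟩
        rcases le_or_gt j d with hjd | hjd
        · -- π j ≥ π d ≥ d + 1 > d ≥ i
          have h1 : π d ≤ π j := hπmono j d hj1 hjd
          have h2 := hπd1 (by omega)
          omega
        · rw [hπout j hjd]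
          exact (filter_card_iff (c := fun k => α k / 2 + k) (j := j + 1)
            hcanti hi hid).mpr (by omega)
    have := hcd i hi hid
    rw [conj, hset, ← Finset.coe_Icc, Set.ncard_coe_finset, Nat.card_Icc]
    omega
  -- ranks
  have hrank : ∀ i, 1 ≤ i → i ≤ d → rank π i ∈ ({1, 2} : Set ℤ) := by
    intro i hi hid
    have h1 := hconj i hi hid
    have h2 := hπin i hi hid
    simp only [rank, Set.mem_insert_iff, Set.mem_singleton_iff]
    omega
  -- angPart
  have hang : angPart π = α := by
    funext i
    rcases Nat.eq_zero_or_pos i with hi0 | hi1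
    · rw [hi0, h0, angPart, if_neg (by omega)]
    rcases le_or_gt i d with hid | hid
    · rw [angPart, if_pos (by rw [hdurf]; exact ⟨hi1, hid⟩)]
      have h1 := hconj i hi1 hid
      have h2 := hπin i hi1 hid
      omega
    · rw [angPart, if_neg (by rw [hdurf]; omega), hαzero i hid]
  -- size
  have hsize : size π = size α := by
    have h1 := size_eq hπpart
    rw [hdurf] at h1
    have h2 : size α = ∑ j ∈ Finset.Icc 1 d, α j := size_eq_sum h0 hαzero
    have h3 : ((∑ j ∈ Finset.Icc 1 d, α j : ℕ) : ℤ)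
        = ∑ i ∈ Finset.Icc 1 d, ((π i : ℤ) + (conj π i : ℤ) + 1 - 2 * i) := by
      rw [Nat.cast_sum]
      apply Finset.sum_congr rfl
      intro i hi
      simp only [Finset.mem_Icc] at hi
      have ha := hconj i hi.1 hi.2
      have hb := hπin i hi.1 hi.2
      omega
    have : (size π : ℤ) = (size α : ℤ) := by rw [h1, h2, h3]
    exact_mod_cast this
  rw [← hdd, ← hπd] at *
  exact ⟨hπpart, hdurf, hrank, hsize, hang⟩


theorem stmt8 (n : ℕ) :
    {π | IsPartition π ∧ size π = n ∧
        ∀ i, 1 ≤ i → i ≤ durfee π → rank π i ∈ ({1, 2} : Set ℤ)}.ncard =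
    {α | IsPartition α ∧ size α = n ∧
        (∀ i, 1 ≤ i → i + 1 ≤ len α → α (i + 1) + 2 ≤ α i) ∧ (∀ i, 1 ≤ i → i ≤ len α → 2 ≤ α i)}.ncard := by
  set S := {π | IsPartition π ∧ size π = n ∧
      ∀ i, 1 ≤ i → i ≤ durfee π → rank π i ∈ ({1, 2} : Set ℤ)} with hS
  set T := {α | IsPartition α ∧ size α = n ∧
      (∀ i, 1 ≤ i → i + 1 ≤ len α → α (i + 1) + 2 ≤ α i) ∧
      (∀ i, 1 ≤ i → i ≤ len α → 2 ≤ α i)} with hT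
  have key1 : ∀ π ∈ S, angPart π ∈ T ∧ Ginv (angPart π) = π := by
    rintro π ⟨hπ, hπn, hπr⟩
    obtain ⟨hpart, hlen, hα2, hgap, hsize, hGinv⟩ := forward hπ hπr
    refine ⟨⟨hpart, by rw [hsize, hπn], ?_, ?_⟩, hGinv⟩
    · intro i hi hid
      rw [hlen] at hid
      exact hgap i hi hid
    · intro i hi hid
      rw [hlen] at hid
      exact hα2 i hi hid
  have key2 : ∀ α ∈ T, Ginv α ∈ S ∧ angPart (Ginv α) = α := by
    rintro α ⟨hα, hαn, hαgap, hαmin⟩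
    obtain ⟨hpart, hdurf, hrank, hsize, hang⟩ := backward hα hαgap hαmin
    refine ⟨⟨hpart, by rw [hsize, hαn], ?_⟩, hang⟩
    intro i hi hid
    rw [hdurf] at hid
    exact hrank i hi hid
  have himg : angPart '' S = T := by
    apply Set.Subset.antisymm
    · rintro β ⟨π, hπ, rfl⟩
      exact (key1 π hπ).1
    · intro α hα
      exact ⟨Ginv α, (key2 α hα).1, (key2 α hα).2⟩
  have hinj : Set.InjOn angPart S := by
    intro a ha b hb h
    rw [← (key1 a ha).2, h, (key1 b hb).2]
  rw [← himg, Set.ncard_image_of_injOn hinj]
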